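/- arXiv:1409.4302 — 3 statements merged into one kernel-verified Lean document; each statement's English description precedes it below -/
import Mathlib

section
/- Let (Δ_k) be square-integrable random variables with E Δ_k² ≤ K b^k for some K < ∞ and 0 ≤ b < 1. Let N be a ℕ-valued random variable independent of (Δ_k) with P(N ≥ k) > 0 for all k and ∑_{k=0}^∞ b^{k/2} / P(N ≥ k) < ∞. Then Z = ∑_{k=0}^N Δ_k / P(N ≥ k) has finite second moment. -/
open MeasureTheory ProbabilityTheory Filter
open scoped Topology

/-- Finite second moment of the randomized estimator under geometric decay. -/
theorem stmt4 {Ω : Type*} [MeasureSpace Ω] [IsProbabilityMeasure (ℙ : Measure Ω)]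
    (Δ : ℕ → Ω → ℝ) (N : Ω → ℕ) (K b : ℝ)
    (hK : 0 ≤ K) (hb0 : 0 ≤ b) (hb1 : b < 1)
    (hΔmeas : ∀ k, Measurable (Δ k)) (hNmeas : Measurable N)
    (hL2 : ∀ k, MemLp (Δ k) 2)
    (hbound : ∀ k : ℕ, ∫ ω, (Δ k ω)^2 ≤ K * b^k)
    (hindep : IndepFun N (fun ω k => Δ k ω))
    (hpos : ∀ k : ℕ, 0 < (ℙ {ω | k ≤ N ω}).toReal)
    (hsum : Summable (fun k : ℕ => Real.sqrt (b^k) / (ℙ {ω | k ≤ N ω}).toReal)) :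
    MemLp (fun ω => ∑ k ∈ Finset.range (N ω + 1),
      Δ k ω / (ℙ {ω' | k ≤ N ω'}).toReal) 2 := by
  classical
  set p : ℕ → ℝ := fun k => (ℙ {ω' | k ≤ N ω'}).toReal with hpdef
  set f : ℕ → Ω → ℝ := fun k ω => if k ≤ N ω then Δ k ω / p k else 0 with hfdef
  have hppos : ∀ k, 0 < p k := hpos
  -- each f k is in L²
  have hdivmem : ∀ k, MemLp (fun ω => Δ k ω / p k) 2 := by
    intro k
    simpa [div_eq_inv_mul] using (hL2 k).const_mul (p k)⁻¹
  have hsetmeas : ∀ k, MeasurableSet {ω | k ≤ N ω} := fun k =>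
    hNmeas measurableSet_Ici
  have hfmem : ∀ k, MemLp (f k) 2 := by
    intro k
    have h := ((hdivmem k).indicator (hsetmeas k))
    have heq : {ω | k ≤ N ω}.indicator (fun ω => Δ k ω / p k) = f k := by
      funext ω
      by_cases hω : k ≤ N ω <;> simp [Set.indicator, hω, hfdef]
    rwa [heq] at h
  -- second moment bound for f k
  have hint_le : ∀ k, ∫ ω, (f k ω) ^ 2 ≤ K * b ^ k / (p k) ^ 2 := by
    intro k
    have h1 : ∫ ω, (f k ω) ^ 2 ≤ ∫ ω, (Δ k ω / p k) ^ 2 := by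
      refine integral_mono (hfmem k).integrable_sq (hdivmem k).integrable_sq ?_
      intro ω
      by_cases hω : k ≤ N ω
      · simp [hfdef, hω]
      · simp only [hfdef, hω, if_false]
        simpa using sq_nonneg (Δ k ω / p k)
    have h2 : ∫ ω, (Δ k ω / p k) ^ 2 = (∫ ω, (Δ k ω) ^ 2) / (p k) ^ 2 := by
      simp_rw [div_pow]
      exact integral_div _ _
    calc ∫ ω, (f k ω) ^ 2 ≤ ∫ ω, (Δ k ω / p k) ^ 2 := h1
      _ = (∫ ω, (Δ k ω) ^ 2) / (p k) ^ 2 := h2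
      _ ≤ K * b ^ k / (p k) ^ 2 :=
          div_le_div_of_nonneg_right (hbound k) (sq_nonneg (p k))
  -- pass to Lp elements
  haveI hfact : Fact ((1 : ENNReal) ≤ 2) := ⟨one_le_two⟩
  set F : ℕ → Lp ℝ 2 (ℙ : Measure Ω) := fun k => (hfmem k).toLp (f k) with hFdef
  have hFnorm : ∀ k, ‖F k‖ ≤ Real.sqrt K * (Real.sqrt (b ^ k) / p k) := by
    intro k
    have hsn := (hfmem k).eLpNorm_eq_integral_rpow_norm two_ne_zero ENNReal.ofNat_ne_top
    have htr : (2 : ENNReal).toReal = (2 : ℝ) := by simp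
    have hbody : (fun a => ‖f k a‖ ^ (2 : ENNReal).toReal) = fun a => (f k a) ^ 2 := by
      funext a
      have h2 : ‖f k a‖ ^ (2 : ℝ) = ‖f k a‖ ^ (2 : ℕ) := by
        rw [← Real.rpow_natCast]; norm_num
      rw [htr, h2, Real.norm_eq_abs, sq_abs]
    rw [hbody] at hsn
    have hIpos : (0 : ℝ) ≤ ∫ a, (f k a) ^ 2 := integral_nonneg fun a => sq_nonneg _
    have hle : (∫ a, (f k a) ^ 2) ^ (2 : ENNReal).toReal⁻¹ ≤
        (K * b ^ k / (p k) ^ 2) ^ (2 : ENNReal).toReal⁻¹ :=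
      Real.rpow_le_rpow hIpos (hint_le k) (by positivity)
    have hsqrt : (K * b ^ k / (p k) ^ 2) ^ (2 : ENNReal).toReal⁻¹ =
        Real.sqrt K * (Real.sqrt (b ^ k) / p k) := by
      rw [htr, ← one_div, ← Real.sqrt_eq_rpow, Real.sqrt_div (by positivity),
        Real.sqrt_mul hK, Real.sqrt_sq (hppos k).le, mul_div_assoc]
    calc ‖F k‖ = (eLpNorm (f k) 2 ℙ).toReal := Lp.norm_toLp _ _
      _ ≤ Real.sqrt K * (Real.sqrt (b ^ k) / p k) := by
          rw [hsn, ENNReal.toReal_ofReal (Real.rpow_nonneg hIpos _)]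
          exact hle.trans_eq hsqrt
  have hFsum : Summable fun k => ‖F k‖ :=
    Summable.of_nonneg_of_le (fun k => norm_nonneg _) hFnorm (hsum.mul_left (Real.sqrt K))
  have hSummF : Summable F := hFsum.of_norm
  set S : Lp ℝ 2 (ℙ : Measure Ω) := ∑' k, F k with hSdef
  have htend : Tendsto (fun n => ∑ k ∈ Finset.range n, F k) atTop (𝓝 S) :=
    hSummF.hasSum.tendsto_sum_nat
  set G : ℕ → Ω → ℝ := fun n ω => ∑ k ∈ Finset.range n, f k ω with hGdef
  have hGmem : ∀ n, MemLp (G n) 2 := fun n => memLp_finset_sum _ fun k _ => hfmem k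
  have hcoe : ∀ n, (⇑(∑ k ∈ Finset.range n, F k) : Ω → ℝ) =ᵐ[ℙ] G n := by
    intro n
    induction n with
    | zero =>
        simp only [Finset.range_zero, Finset.sum_empty]
        filter_upwards [Lp.coeFn_zero ℝ 2 (ℙ : Measure Ω)] with ω hω
        simp [hω, hGdef]
    | succ n ih =>
        have h3 : (⇑(F n) : Ω → ℝ) =ᵐ[ℙ] f n := (hfmem n).coeFn_toLp
        rw [Finset.sum_range_succ]
        filter_upwards [Lp.coeFn_add (∑ k ∈ Finset.range n, F k) (F n), ih, h3]
          with ω h1 h2 h3'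
        rw [h1, Pi.add_apply, h2, h3']
        simp [hGdef, Finset.sum_range_succ]
  have htendL2 : Tendsto (fun n => eLpNorm (G n - ⇑S) 2 ℙ) atTop (𝓝 0) := by
    have h := (Lp.tendsto_Lp_iff_tendsto_eLpNorm' (fun n => ∑ k ∈ Finset.range n, F k) S).mp htend
    exact h.congr fun n => eLpNorm_congr_ae ((hcoe n).sub (EventuallyEq.refl _ _))
  have hmeas : TendstoInMeasure ℙ G atTop ⇑S :=
    tendstoInMeasure_of_tendsto_eLpNorm (p := 2) two_ne_zero
      (fun n => (hGmem n).aestronglyMeasurable) (Lp.aestronglyMeasurable S) htendL2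
  obtain ⟨ns, hns, hae⟩ := hmeas.exists_seq_tendsto_ae
  have key : ∀ ω n, N ω + 1 ≤ n →
      G n ω = ∑ k ∈ Finset.range (N ω + 1), Δ k ω / p k := by
    intro ω n hn
    have hsub : Finset.range (N ω + 1) ⊆ Finset.range n := Finset.range_subset_range.mpr hn
    have h1 : G n ω = ∑ k ∈ Finset.range (N ω + 1), f k ω := by
      refine (Finset.sum_subset hsub fun k _ hk' => ?_).symm
      have hk : ¬ k ≤ N ω := fun h => hk' (Finset.mem_range.mpr (Nat.lt_succ_of_le h))
      simp [hfdef, hk]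
    rw [h1]
    refine Finset.sum_congr rfl fun k hk => ?_
    have hkle : k ≤ N ω := Nat.lt_succ_iff.mp (Finset.mem_range.mp hk)
    simp [hfdef, hkle]
  have hZS : (fun ω => ∑ k ∈ Finset.range (N ω + 1), Δ k ω / p k) =ᵐ[ℙ] ⇑S := by
    filter_upwards [hae] with ω hω
    have h1 : Tendsto (fun i => G (ns i) ω) atTop
        (𝓝 (∑ k ∈ Finset.range (N ω + 1), Δ k ω / p k)) := by
      apply Tendsto.congr' _ tendsto_const_nhds
      filter_upwards [hns.tendsto_atTop.eventually_ge_atTop (N ω + 1)] with i hi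
      exact (key ω (ns i) hi).symm
    exact tendsto_nhds_unique h1 hω
  exact (Lp.memLp S).ae_eq hZS.symm
end

section
/- Let τ_j, N_j (j ≥ 1) be i.i.d. copies of a pair (τ, N) of ℕ-valued random variables with E[(τ ∧ N)^{α+1}] < ∞, and suppose P(N ≥ k) ≥ (c/2) k^{-α} for all k ≥ m₀. Then almost surely, limsup_{n→∞} ∑_{k > m} (1/n) ∑_{j=1}^n 𝟙(τ_j ∧ N_j ≥ k) / P(N ≥ k) ≤ (2/c) · (α+1)^{-1} · C · E[(τ ∧ N)^{α+1} 𝟙(τ ∧ N ≥ m)] for all m ≥ m₀, where C is an absolute constant; in particular this bound tends to 0 as m → ∞. -/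
open MeasureTheory ProbabilityTheory Filter Topology

lemma aux_sum_bound (c α : ℝ) (hc : 0 < c) (hα : 0 < α) (P : ℕ → ℝ)
    (m₀ : ℕ) (htail : ∀ k, m₀ ≤ k → c/2 * (k:ℝ)^(-α) ≤ P k)
    (m : ℕ) (hm : m₀ ≤ m) (T : ℕ) (s : Finset ℕ) :
    ∑ k ∈ s, (if m < k then (if k ≤ T then (1:ℝ) else 0) / P k else 0)
      ≤ 2/c * ((T:ℝ)^(α+1) * (if m ≤ T then 1 else 0)) := by
  by_cases hmT : m < T
  · have hT1 : (1:ℝ) ≤ (T:ℝ) := by exact_mod_cast Nat.one_le_iff_ne_zero.2 (by omega)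
    have hT0 : (0:ℝ) < T := lt_of_lt_of_le one_pos hT1
    have step1 : ∑ k ∈ s, (if m < k then (if k ≤ T then (1:ℝ) else 0) / P k else 0)
        ≤ ∑ k ∈ s, (if m < k ∧ k ≤ T then 2/c * (T:ℝ)^α else 0) := by
      apply Finset.sum_le_sum
      intro k _
      by_cases h1 : m < k
      · by_cases h2 : k ≤ T
        · simp only [h1, h2, if_true, and_self, if_pos]
          have hk1 : (1:ℝ) ≤ (k:ℝ) := by exact_mod_cast Nat.one_le_iff_ne_zero.2 (by omega)
          have hk0 : (0:ℝ) < (k:ℝ) := lt_of_lt_of_le one_pos hk1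
          have hpos : 0 < c/2 * (k:ℝ)^(-α) := by positivity
          have hle : c/2 * (k:ℝ)^(-α) ≤ P k := htail k (by omega)
          have h3 : (1:ℝ) / P k ≤ 1 / (c/2 * (k:ℝ)^(-α)) :=
            one_div_le_one_div_of_le hpos hle
          have h4 : 1 / (c/2 * (k:ℝ)^(-α)) = 2/c * (k:ℝ)^α := by
            rw [Real.rpow_neg hk0.le]
            field_simp
          have h5 : 2/c * (k:ℝ)^α ≤ 2/c * (T:ℝ)^α := by
            apply mul_le_mul_of_nonneg_left _ (by positivity)
            exact Real.rpow_le_rpow hk0.le (by exact_mod_cast h2) hα.le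
          calc (1:ℝ) / P k ≤ 1 / (c/2 * (k:ℝ)^(-α)) := h3
            _ = 2/c * (k:ℝ)^α := h4
            _ ≤ 2/c * (T:ℝ)^α := h5
        · simp [h1, h2]
      · simp [h1]
    have step2 : ∑ k ∈ s, (if m < k ∧ k ≤ T then 2/c * (T:ℝ)^α else 0)
        = ((s.filter (fun k => m < k ∧ k ≤ T)).card : ℝ) * (2/c * (T:ℝ)^α) := by
      rw [← Finset.sum_filter, Finset.sum_const, nsmul_eq_mul]
    have step3 : ((s.filter (fun k => m < k ∧ k ≤ T)).card : ℝ) ≤ (T:ℝ) := by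
      have : (s.filter (fun k => m < k ∧ k ≤ T)).card ≤ T := by
        have hsub : s.filter (fun k => m < k ∧ k ≤ T) ⊆ Finset.Icc 1 T := by
          intro k hk
          simp only [Finset.mem_filter] at hk
          simp only [Finset.mem_Icc]
          omega
        calc (s.filter (fun k => m < k ∧ k ≤ T)).card ≤ (Finset.Icc 1 T).card :=
            Finset.card_le_card hsub
          _ = T := by rw [Nat.card_Icc]; omega
      exact_mod_cast this
    calc ∑ k ∈ s, (if m < k then (if k ≤ T then (1:ℝ) else 0) / P k else 0)
        ≤ ((s.filter (fun k => m < k ∧ k ≤ T)).card : ℝ) * (2/c * (T:ℝ)^α) :=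
          step1.trans step2.le
      _ ≤ (T:ℝ) * (2/c * (T:ℝ)^α) := by
          apply mul_le_mul_of_nonneg_right step3 (by positivity)
      _ = 2/c * ((T:ℝ)^(α+1) * (if m ≤ T then 1 else 0)) := by
          rw [if_pos hmT.le, Real.rpow_add_one hT0.ne']
          ring
  · have : ∀ k ∈ s, (if m < k then (if k ≤ T then (1:ℝ) else 0) / P k else 0) = 0 := by
      intro k _
      by_cases h1 : m < k
      · have : ¬ (k ≤ T) := by omega
        simp [h1, this]
      · simp [h1]
    rw [Finset.sum_congr rfl this, Finset.sum_const, smul_zero]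
    have : (0:ℝ) ≤ (if m ≤ T then (1:ℝ) else 0) := by positivity
    positivity

/-- Truncation estimate (4.3)-(4.4) in the Glivenko-Cantelli argument. -/
theorem stmt9 {Ω : Type*} [MeasureSpace Ω] [IsProbabilityMeasure (ℙ : Measure Ω)]
    (τ N : Ω → ℕ) (hτ : Measurable τ) (hN : Measurable N)
    (TN : ℕ → Ω → ℕ × ℕ) (hTN : ∀ j, Measurable (TN j))
    (hiid : iIndepFun TN ℙ)
    (hident : ∀ j, IdentDistrib (TN j) (fun ω => (τ ω, N ω)) ℙ ℙ)
    (c α : ℝ) (hc : 0 < c) (hα : 0 < α) (m₀ : ℕ)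
    (hmom : Integrable (fun ω => (min (τ ω) (N ω) : ℝ)^(α + 1)))
    (htail : ∀ k : ℕ, m₀ ≤ k → c / 2 * (k : ℝ)^(-α) ≤ (ℙ {ω | k ≤ N ω}).toReal) :
    ∃ C : ℝ, 0 < C ∧
      (∀ᵐ ω ∂ℙ, ∀ m : ℕ, m₀ ≤ m →
        Filter.limsup (fun n : ℕ =>
          ∑' k : ℕ, if m < k then
            (1 / (n : ℝ)) * ∑ j ∈ Finset.range n,
              (if k ≤ min (TN j ω).1 (TN j ω).2 then 1 else 0)
                / (ℙ {ω' | k ≤ N ω'}).toReal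
          else 0) Filter.atTop
        ≤ (2 / c) * (α + 1)⁻¹ * C *
            ∫ ω', (min (τ ω') (N ω') : ℝ)^(α + 1) *
              (if m ≤ min (τ ω') (N ω') then 1 else 0)) ∧
      Tendsto (fun m : ℕ => (2 / c) * (α + 1)⁻¹ * C *
          ∫ ω', (min (τ ω') (N ω') : ℝ)^(α + 1) *
            (if m ≤ min (τ ω') (N ω') then 1 else 0))
        atTop (nhds 0) := by
  have hα1 : (0:ℝ) < α + 1 := by linarith
  -- the function on pairs
  set f : ℕ → ℕ × ℕ → ℝ :=
    fun m p => (min p.1 p.2 : ℝ)^(α+1) * (if m ≤ min p.1 p.2 then 1 else 0) with hf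
  have hfmeas : ∀ m, Measurable (f m) := fun m => measurable_of_countable _
  have hfnonneg : ∀ m p, 0 ≤ f m p := by
    intro m p
    have : (0:ℝ) ≤ (if m ≤ min p.1 p.2 then (1:ℝ) else 0) := by positivity
    positivity
  have hfle : ∀ m p, f m p ≤ (min p.1 p.2 : ℝ)^(α+1) := by
    intro m p
    simp only [hf]
    split_ifs
    · rw [mul_one]
    · rw [mul_zero]; positivity
  -- integrability of truncated moment functions
  have hint : ∀ m, Integrable (fun ω => f m (τ ω, N ω)) := by
    intro m
    apply hmom.mono (((hfmeas m).comp (hτ.prodMk hN)).aestronglyMeasurable)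
    filter_upwards with ω
    simp only [Function.comp_apply, Real.norm_eq_abs]
    rw [abs_of_nonneg (hfnonneg m _), abs_of_nonneg (by positivity)]
    exact hfle m _
  have hintTN : ∀ m, Integrable (fun ω => f m (TN 0 ω)) := fun m =>
    ((hident 0).comp (hfmeas m)).integrable_iff.2 (hint m)
  have hEeq : ∀ m, ∫ ω, f m (TN 0 ω) = ∫ ω', f m (τ ω', N ω') := fun m =>
    ((hident 0).comp (hfmeas m)).integral_eq
  -- SLLN for each m
  have slln : ∀ m : ℕ, ∀ᵐ ω ∂ℙ, Tendsto
      (fun n : ℕ => (∑ i ∈ Finset.range n, f m (TN i ω)) / n) atTop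
      (𝓝 (∫ ω, f m (TN 0 ω))) := by
    intro m
    exact ProbabilityTheory.strong_law_ae_real (fun i ω => f m (TN i ω))
      (hintTN m)
      (fun i j hij => ((hiid.indepFun hij).comp (hfmeas m) (hfmeas m)))
      (fun i => ((hident i).trans (hident 0).symm).comp (hfmeas m))
  refine ⟨α + 1, hα1, ?_, ?_⟩
  · -- main a.s. bound
    rw [ae_all_iff]
    intro m
    by_cases hm : m₀ ≤ m
    case neg => filter_upwards with ω h; exact absurd h hm
    · filter_upwards [slln m] with ω hω _
      set Pr : ℕ → ℝ := fun k => (ℙ {ω' | k ≤ N ω'}).toReal with hPr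
      set T : ℕ → ℕ := fun j => min (TN j ω).1 (TN j ω).2 with hT
      -- pointwise bound for each n
      have hb : ∀ n : ℕ,
          (∑' k : ℕ, if m < k then
            (1 / (n : ℝ)) * ∑ j ∈ Finset.range n,
              (if k ≤ T j then (1:ℝ) else 0) / Pr k
          else 0)
          ≤ (2/c) * ((∑ i ∈ Finset.range n, f m (TN i ω)) / n) := by
        intro n
        set M := (Finset.range n).sup T with hM
        have hzero : ∀ k ∉ Finset.range (M+1),
            (if m < k then (1 / (n : ℝ)) * ∑ j ∈ Finset.range n,
              (if k ≤ T j then (1:ℝ) else 0) / Pr k else 0) = 0 := by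
          intro k hk
          simp only [Finset.mem_range, not_lt] at hk
          have hs : ∀ j ∈ Finset.range n, (if k ≤ T j then (1:ℝ) else 0) / Pr k = 0 := by
            intro j hj
            have : ¬ (k ≤ T j) := by
              have := Finset.le_sup (f := T) hj
              omega
            simp [this]
          rw [Finset.sum_congr rfl hs]
          simp
        rw [tsum_eq_sum hzero]
        have hsplit : ∀ k : ℕ,
            (if m < k then (1 / (n : ℝ)) * ∑ j ∈ Finset.range n,
              (if k ≤ T j then (1:ℝ) else 0) / Pr k else 0)
            = (1 / (n : ℝ)) * ∑ j ∈ Finset.range n,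
                (if m < k then (if k ≤ T j then (1:ℝ) else 0) / Pr k else 0) := by
          intro k
          split_ifs with h
          · rfl
          · simp
        rw [Finset.sum_congr rfl (fun k _ => hsplit k), ← Finset.mul_sum,
          Finset.sum_comm]
        have hinner : ∀ j ∈ Finset.range n,
            (∑ k ∈ Finset.range (M+1),
              (if m < k then (if k ≤ T j then (1:ℝ) else 0) / Pr k else 0))
            ≤ 2/c * f m (TN j ω) := by
          intro j _
          have h := aux_sum_bound c α hc hα Pr m₀ htail m hm (T j)
            (Finset.range (M+1))
          have he : (2:ℝ)/c * ((T j:ℝ)^(α+1) * (if m ≤ T j then 1 else 0))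
              = 2/c * f m (TN j ω) := by
            simp only [hf, hT, Nat.cast_min]
          exact he ▸ h
        calc (1 / (n : ℝ)) * ∑ j ∈ Finset.range n,
              (∑ k ∈ Finset.range (M+1),
                (if m < k then (if k ≤ T j then (1:ℝ) else 0) / Pr k else 0))
            ≤ (1 / (n : ℝ)) * ∑ j ∈ Finset.range n, (2/c * f m (TN j ω)) := by
              apply mul_le_mul_of_nonneg_left (Finset.sum_le_sum hinner) (by positivity)
          _ = (2/c) * ((∑ i ∈ Finset.range n, f m (TN i ω)) / n) := by
              rw [← Finset.mul_sum]; ring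
      have hTend : Tendsto (fun n : ℕ =>
          (2/c) * ((∑ i ∈ Finset.range n, f m (TN i ω)) / n)) atTop
          (𝓝 ((2/c) * (∫ ω, f m (TN 0 ω)))) := hω.const_mul _
      have hnonneg : ∀ n : ℕ,
          (0:ℝ) ≤ ∑' k : ℕ, if m < k then
            (1 / (n : ℝ)) * ∑ j ∈ Finset.range n,
              (if k ≤ T j then (1:ℝ) else 0) / Pr k
          else 0 := by
        intro n
        apply tsum_nonneg
        intro k
        have : (0:ℝ) ≤ ∑ j ∈ Finset.range n, (if k ≤ T j then (1:ℝ) else 0) / Pr k := by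
          apply Finset.sum_nonneg
          intro j _
          have h1 : (0:ℝ) ≤ (if k ≤ T j then (1:ℝ) else 0) := by positivity
          have h2 : (0:ℝ) ≤ Pr k := ENNReal.toReal_nonneg
          positivity
        positivity
      have hls : Filter.limsup (fun n : ℕ =>
          ∑' k : ℕ, if m < k then
            (1 / (n : ℝ)) * ∑ j ∈ Finset.range n,
              (if k ≤ T j then (1:ℝ) else 0) / Pr k
          else 0) Filter.atTop ≤ (2/c) * (∫ ω, f m (TN 0 ω)) := by
        rw [← hTend.limsup_eq]
        have hbdd : Filter.IsBoundedUnder (· ≥ ·) Filter.atTop (fun n : ℕ =>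
            ∑' k : ℕ, if m < k then
              (1 / (n : ℝ)) * ∑ j ∈ Finset.range n,
                (if k ≤ T j then (1:ℝ) else 0) / Pr k
            else 0) := Filter.isBoundedUnder_of ⟨0, fun n => hnonneg n⟩
        have hco := hbdd.isCoboundedUnder_le
        exact Filter.limsup_le_limsup (Filter.Eventually.of_forall hb) hco
          hTend.isBoundedUnder_le
      have hconst : (2 / c) * (α + 1)⁻¹ * (α + 1) = 2/c := by
        field_simp
      rw [hconst] at *
      calc _ ≤ (2/c) * (∫ ω, f m (TN 0 ω)) := hls
        _ = 2 / c * ∫ ω', (min (τ ω') (N ω') : ℝ)^(α + 1) *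
              (if m ≤ min (τ ω') (N ω') then 1 else 0) := by rw [hEeq m]
  · -- tendsto 0
    have h0 : Tendsto (fun m : ℕ => ∫ ω', f m (τ ω', N ω')) atTop (𝓝 0) := by
      have := MeasureTheory.tendsto_integral_of_dominated_convergence
        (F := fun m ω => f m (τ ω, N ω)) (f := fun _ => (0:ℝ))
        (bound := fun ω => (min (τ ω) (N ω) : ℝ)^(α+1))
        (fun m => (((hfmeas m).comp (hτ.prodMk hN)).aestronglyMeasurable))
        hmom
        (fun m => Filter.Eventually.of_forall (fun ω => by
          rw [Real.norm_eq_abs, abs_of_nonneg (hfnonneg m _)]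
          exact hfle m _))
        (Filter.Eventually.of_forall (fun ω => by
          have heq : (fun m => f m (τ ω, N ω)) =ᶠ[atTop] (fun _ => (0:ℝ)) := by
            filter_upwards [Filter.eventually_ge_atTop (min (τ ω) (N ω) + 1)] with k hk
            simp only [hf]
            split_ifs with h
            · exfalso
              have h' : k ≤ min (τ ω) (N ω) := h
              omega
            · rw [mul_zero]
          exact Tendsto.congr' heq.symm tendsto_const_nhds))
      simpa using this
    have := h0.const_mul ((2 / c) * (α + 1)⁻¹ * (α + 1))
    rw [mul_zero] at this
    exact this
end

section
/- Let (Y_k), (Y'_k) be real-valued processes and τ a ℕ-valued random variable such that (Y_{τ+j} : j ≥ 0) has the same distribution as (Y'_{τ+j-1} : j ≥ 0) conditionally on each event {τ = i}, and such that ((Y_{τ+j}, Y'_{τ+j-1}) : j ≥ 0) is independent of τ, with Y'_k distributed as Y_k for each k. If f is bounded and Δ_k := (f(Y_k) − f(Y'_{k-1})) 𝟙(τ > k), then E Δ_k = E f(Y_k) − E f(Y_{k-1}). -/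
open MeasureTheory ProbabilityTheory Filter

lemma bdd_int10 {Ω : Type*} [MeasureSpace Ω] [IsProbabilityMeasure (ℙ : Measure Ω)]
    {h : Ω → ℝ} (hm : AEStronglyMeasurable h ℙ) {C : ℝ} (hb : ∀ ω, |h ω| ≤ C) :
    Integrable h ℙ :=
  ⟨hm, HasFiniteIntegral.of_bounded (C := C) (ae_of_all _ (by simpa using hb))⟩

/-- The distributional-coupling identity for the mean of the coupled differences. -/
theorem stmt10 {Ω : Type*} [MeasureSpace Ω] [IsProbabilityMeasure (ℙ : Measure Ω)]
    (Y Y' : ℕ → Ω → ℝ) (τ : Ω → ℕ)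
    (hY : ∀ k, Measurable (Y k)) (hY' : ∀ k, Measurable (Y' k)) (hτ : Measurable τ)
    (f : ℝ → ℝ) (hfm : Measurable f) (M : ℝ) (hfb : ∀ x, |f x| ≤ M)
    (hcond : ∀ i : ℕ,
      IdentDistrib (fun ω (j : ℕ) => Y (i + j) ω) (fun ω (j : ℕ) => Y' (i + j - 1) ω)
        (ℙ[|{ω | τ ω = i}]) (ℙ[|{ω | τ ω = i}]))
    (hindep : IndepFun (fun ω (j : ℕ) => (Y (τ ω + j) ω, Y' (τ ω + j - 1) ω)) τ)
    (hmarg : ∀ k, IdentDistrib (Y' k) (Y k) ℙ ℙ) :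
    ∀ k : ℕ, 1 ≤ k →
      ∫ ω, (f (Y k ω) - f (Y' (k - 1) ω)) * (if k < τ ω then 1 else 0)
        = (∫ ω, f (Y k ω)) - ∫ ω, f (Y (k - 1) ω) := by
  intro k hk
  set s : ℕ → Set Ω := fun i => {ω | τ ω = i} with hs
  have hsm : ∀ i, MeasurableSet (s i) := fun i => hτ (measurableSet_singleton i)
  set g : Ω → ℝ := fun ω => f (Y k ω) - f (Y' (k - 1) ω) with hgdef
  have hgm : Measurable g := (hfm.comp (hY k)).sub (hfm.comp (hY' (k-1)))
  have hgb : ∀ ω, |g ω| ≤ M + M := fun ω =>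
    (abs_sub _ _).trans (add_le_add (hfb _) (hfb _))
  have hgint : Integrable g ℙ := bdd_int10 hgm.aestronglyMeasurable hgb
  have hYkint : Integrable (fun ω => f (Y k ω)) ℙ :=
    bdd_int10 (hfm.comp (hY k)).aestronglyMeasurable (fun ω => hfb _)
  have hY'int : Integrable (fun ω => f (Y' (k-1) ω)) ℙ :=
    bdd_int10 (hfm.comp (hY' (k-1))).aestronglyMeasurable (fun ω => hfb _)
  -- key: set integrals over {τ = i} agree
  have key : ∀ i, i ≤ k → ∫ ω in s i, f (Y k ω) = ∫ ω in s i, f (Y' (k-1) ω) := by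
    intro i hi
    by_cases h0 : (ℙ : Measure Ω) (s i) = 0
    · simp [Measure.restrict_eq_zero.mpr h0]
    · have hid := (hcond i).comp (u := fun x : ℕ → ℝ => f (x (k - i)))
        (hfm.comp (measurable_pi_apply _))
      have hieq := hid.integral_eq
      have e1 : i + (k - i) = k := by omega
      have e2 : i + (k - i) - 1 = k - 1 := by omega
      simp only [ProbabilityTheory.cond, integral_smul_measure, smul_eq_mul,
        Function.comp, e1, e2] at hieq
      have hc : ((ℙ (s i))⁻¹).toReal ≠ 0 := by
        rw [ENNReal.toReal_inv]
        exact inv_ne_zero (ENNReal.toReal_ne_zero.mpr ⟨h0, measure_ne_top _ _⟩)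
      exact mul_left_cancel₀ hc hieq
  -- pointwise decomposition
  have hpt : ∀ ω, g ω * (if k < τ ω then 1 else 0)
      = g ω - ∑ i ∈ Finset.range (k+1), (s i).indicator g ω := by
    intro ω
    have hsum : ∑ i ∈ Finset.range (k+1), (s i).indicator g ω
        = if τ ω ≤ k then g ω else 0 := by
      simp only [Set.indicator_apply, hs, Set.mem_setOf_eq]
      rw [Finset.sum_ite_eq (Finset.range (k+1)) (τ ω) (fun _ => g ω)]
      simp [Finset.mem_range, Nat.lt_succ_iff]
    rw [hsum]
    by_cases h : k < τ ω
    · simp [h, not_le.mpr h]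
    · simp [h, not_lt.mp h]
  have hindint : ∀ i, Integrable ((s i).indicator g) ℙ := fun i => hgint.indicator (hsm i)
  calc ∫ ω, g ω * (if k < τ ω then 1 else 0)
      = ∫ ω, (g ω - ∑ i ∈ Finset.range (k+1), (s i).indicator g ω) :=
        integral_congr_ae (ae_of_all _ hpt)
    _ = (∫ ω, g ω) - ∫ ω, ∑ i ∈ Finset.range (k+1), (s i).indicator g ω :=
        integral_sub hgint (integrable_finset_sum _ (fun i _ => hindint i))
    _ = (∫ ω, g ω) - ∑ i ∈ Finset.range (k+1), ∫ ω, (s i).indicator g ω := by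
        rw [integral_finset_sum _ (fun i _ => hindint i)]
    _ = (∫ ω, g ω) - 0 := by
        congr 1
        refine Finset.sum_eq_zero (fun i hi => ?_)
        rw [integral_indicator (hsm i)]
        have := key i (Nat.lt_succ_iff.mp (Finset.mem_range.mp hi))
        rw [integral_sub (hYkint.restrict) (hY'int.restrict), this, sub_self]
    _ = (∫ ω, f (Y k ω)) - ∫ ω, f (Y (k - 1) ω) := by
        have hm2 := ((hmarg (k-1)).comp hfm).integral_eq
        simp only [Function.comp] at hm2
        rw [sub_zero, integral_sub hYkint hY'int, hm2]
end
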